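/- Let g(n) = sum over graphs G in G^1_n of k^{C(G)}, where G^1_n is the set of graphs on 2n vertices O_1,...,O_{2n} with a fixed perfect matching {(O_{2j-1},O_{2j}) : j in [n]} of black edges together with an arbitrary perfect matching of red edges, and C(G) is the number of connected components. Then g(n) satisfies the recursion g(n) = (k + 2(n-1)) * g(n-1) with g(0)=1, and hence g(n) = k(k+2)...(k+2n-2). -/

import Mathlib

open Finset

/-- The fixed (black) perfect matching pairing `O_{2j-1}` with `O_{2j}`,
i.e. vertex `2j` with vertex `2j+1` in 0-indexed form. -/
def blackPartner (n : ℕ) (v : Fin (2 * n)) : Fin (2 * n) :=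
  ⟨if v.val % 2 = 0 then v.val + 1 else v.val - 1, by have := v.isLt; split <;> omega⟩

/-- The graph on `2n` vertices formed by the fixed black perfect matching together with the
red perfect matching given by the fixed-point-free involution `σ`. -/
def matchingGraph (n : ℕ) (σ : Equiv.Perm (Fin (2 * n))) : SimpleGraph (Fin (2 * n)) :=
  SimpleGraph.fromRel (fun v w => blackPartner n v = w ∨ σ v = w)

/-- `g(n) = ∑_{G ∈ 𝔾¹_n} k^{C(G)}`, the sum over all red perfect matchings
(fixed-point-free involutions) of `k` to the number of connected components. -/
noncomputable def gFun (k n : ℕ) : ℕ :=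
  ∑ σ ∈ Finset.univ.filter
      (fun σ : Equiv.Perm (Fin (2 * n)) => (∀ v, σ (σ v) = v) ∧ ∀ v, σ v ≠ v),
    k ^ Nat.card (matchingGraph n σ).ConnectedComponent

namespace Stmt15

lemma fne {m : ℕ} {a b : Fin m} (h : a.val ≠ b.val) : a ≠ b := fun e => h (congrArg Fin.val e)

lemma fvne {m : ℕ} {a b : Fin m} (h : a ≠ b) : a.val ≠ b.val := fun e => h (Fin.ext e)

/-! ### Counting colorings via connected components -/

lemma walk_const {V : Type*} {G : SimpleGraph V} {k : ℕ} {f : V → Fin k}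
    (hf : ∀ v w, G.Adj v w → f v = f w) {v w : V} (q : G.Walk v w) : f v = f w := by
  induction q with
  | nil => rfl
  | cons h _ ih => exact (hf _ _ h).trans ih

def ccEquiv {V : Type*} (G : SimpleGraph V) (k : ℕ) :
    {f : V → Fin k // ∀ v w, G.Adj v w → f v = f w} ≃ (G.ConnectedComponent → Fin k) where
  toFun p := SimpleGraph.ConnectedComponent.lift p.1 (fun _ _ q _ => walk_const p.2 q)
  invFun g := ⟨fun v => g (G.connectedComponentMk v), fun v w h => by
    simp only []
    rw [SimpleGraph.ConnectedComponent.connectedComponentMk_eq_of_adj h]⟩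
  left_inv p := rfl
  right_inv g := by
    funext c
    induction c using SimpleGraph.ConnectedComponent.ind
    rfl

lemma bp_val {n : ℕ} (v : Fin (2*n)) :
    (blackPartner n v).val = if v.val % 2 = 0 then v.val + 1 else v.val - 1 := rfl

lemma bp_ne {n : ℕ} (v : Fin (2*n)) : blackPartner n v ≠ v := by
  apply fne
  rw [bp_val]
  by_cases h : v.val % 2 = 0
  · rw [if_pos h]; omega
  · rw [if_neg h]; have : v.val % 2 = 1 := by omega
    omega

lemma card_f {n k : ℕ} (σ : Equiv.Perm (Fin (2*n)))
    (h2 : ∀ v, σ v ≠ v) :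
    k ^ Nat.card (matchingGraph n σ).ConnectedComponent
      = Nat.card {f : Fin (2*n) → Fin k //
          (∀ v, f (blackPartner n v) = f v) ∧ ∀ v, f (σ v) = f v} := by
  have e1 : {f : Fin (2*n) → Fin k // (∀ v, f (blackPartner n v) = f v) ∧ ∀ v, f (σ v) = f v}
      ≃ {f : Fin (2*n) → Fin k // ∀ v w, (matchingGraph n σ).Adj v w → f v = f w} := by
    apply Equiv.subtypeEquivRight
    intro f
    constructor
    · rintro ⟨hb, hr⟩ v w hadj
      rw [matchingGraph, SimpleGraph.fromRel_adj] at hadj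
      obtain ⟨-, (h'|h')|(h'|h')⟩ := hadj
      · rw [← h']; exact (hb v).symm
      · rw [← h']; exact (hr v).symm
      · rw [← h']; exact hb w
      · rw [← h']; exact hr w
    · intro h
      refine ⟨fun v => ?_, fun v => ?_⟩
      · refine (h v (blackPartner n v) ?_).symm
        rw [matchingGraph, SimpleGraph.fromRel_adj]
        exact ⟨(bp_ne v).symm, Or.inl (Or.inl rfl)⟩
      · refine (h v (σ v) ?_).symm
        rw [matchingGraph, SimpleGraph.fromRel_adj]
        exact ⟨fun e => h2 v e.symm, Or.inl (Or.inr rfl)⟩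
  rw [Nat.card_congr e1, Nat.card_congr (ccEquiv (matchingGraph n σ) k), Nat.card_fun]
  simp

/-! ### Valid pairs -/

abbrev Valid (n k : ℕ) : Type :=
  {p : Equiv.Perm (Fin (2*n)) × (Fin (2*n) → Fin k) //
    (∀ v, p.1 (p.1 v) = v) ∧ (∀ v, p.1 v ≠ v) ∧
    (∀ v, p.2 (blackPartner n v) = p.2 v) ∧ (∀ v, p.2 (p.1 v) = p.2 v)}

def validSigma (n k : ℕ) : Valid n k ≃
    Σ σ : {σ : Equiv.Perm (Fin (2*n)) // (∀ v, σ (σ v) = v) ∧ ∀ v, σ v ≠ v},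
      {f : Fin (2*n) → Fin k // (∀ v, f (blackPartner n v) = f v) ∧ ∀ v, f (σ.1 v) = f v} where
  toFun p := ⟨⟨p.1.1, p.2.1, p.2.2.1⟩, ⟨p.1.2, p.2.2.2.1, p.2.2.2.2⟩⟩
  invFun q := ⟨(q.1.1, q.2.1), q.1.2.1, q.1.2.2, q.2.2.1, q.2.2.2⟩
  left_inv p := rfl
  right_inv q := rfl

lemma gFun_eq (k n : ℕ) : gFun k n = Nat.card (Valid n k) := by
  classical
  rw [gFun, Nat.card_congr (validSigma n k), Nat.card_eq_fintype_card, Fintype.card_sigma]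
  rw [Finset.sum_subtype _
    (p := fun σ : Equiv.Perm (Fin (2*n)) => (∀ v, σ (σ v) = v) ∧ ∀ v, σ v ≠ v)
    (fun x => by simp) (fun σ => k ^ Nat.card (matchingGraph n σ).ConnectedComponent)]
  refine Finset.sum_congr rfl fun σ _ => ?_
  rw [card_f σ.1 σ.2.2, Nat.card_eq_fintype_card]

lemma gFun_zero (k : ℕ) : gFun k 0 = 1 := by
  rw [gFun_eq]
  have e : Valid 0 k ≃ PUnit.{1} := {
    toFun := fun _ => PUnit.unit
    invFun := fun _ => ⟨(Equiv.refl _, fun v => v.elim0),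
      fun v => v.elim0, fun v => v.elim0, fun v => v.elim0, fun v => v.elim0⟩
    left_inv := fun p => Subtype.ext (Prod.ext (Equiv.ext fun v => v.elim0) (funext fun v => v.elim0))
    right_inv := fun _ => rfl }
  rw [Nat.card_congr e]; simp


/-! ### The splice bijection -/

def emb {n : ℕ} (v : Fin (2*n)) : Fin (2*(n+1)) := ⟨v.val, Nat.lt_of_lt_of_le v.isLt (by omega)⟩

@[simp] lemma emb_val {n : ℕ} (v : Fin (2*n)) : (emb v).val = v.val := rfl

lemma emb_inj {n : ℕ} {a b : Fin (2*n)} (h : emb a = emb b) : a = b := by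
  have h2 : (emb a).val = (emb b).val := congrArg Fin.val h
  exact Fin.ext (by simpa using h2)

def L (n : ℕ) : Fin (2*(n+1)) := ⟨2*n+1, by omega⟩
def B (n : ℕ) : Fin (2*(n+1)) := ⟨2*n, by omega⟩

@[simp] lemma L_val (n : ℕ) : (L n).val = 2*n+1 := rfl
@[simp] lemma B_val (n : ℕ) : (B n).val = 2*n := rfl

lemma emb_ne_L {n : ℕ} (v : Fin (2*n)) : emb v ≠ L n :=
  fne (by have := v.isLt; simp; omega)

lemma emb_ne_B {n : ℕ} (v : Fin (2*n)) : emb v ≠ B n :=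
  fne (by have := v.isLt; simp; omega)

lemma cases3 {n : ℕ} (v : Fin (2*(n+1))) : v = L n ∨ v = B n ∨ ∃ x : Fin (2*n), v = emb x := by
  have hlt := v.isLt
  rcases lt_or_ge v.val (2*n) with h | h
  · exact Or.inr (Or.inr ⟨⟨v.val, h⟩, Fin.ext rfl⟩)
  · by_cases hv : v.val = 2*n
    · exact Or.inr (Or.inl (Fin.ext hv))
    · refine Or.inl (Fin.ext ?_)
      show v.val = 2*n+1
      omega

def toSm {n : ℕ} (w : Fin (2*(n+1))) (j : Fin (2*n)) : Fin (2*n) :=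
  if h : w.val < 2*n then ⟨w.val, h⟩ else j

lemma toSm_val {n : ℕ} {w : Fin (2*(n+1))} {j : Fin (2*n)} (h : w.val < 2*n) :
    (toSm w j).val = w.val := by
  simp only [toSm]; rw [dif_pos h]

lemma emb_toSm {n : ℕ} {w : Fin (2*(n+1))} {j : Fin (2*n)} (h : w.val < 2*n) :
    emb (toSm w j) = w :=
  Fin.ext (by rw [emb_val, toSm_val h])

lemma toSm_emb {n : ℕ} (y j : Fin (2*n)) : toSm (emb y) j = y := by
  simp only [toSm]; rw [dif_pos (show (emb y).val < 2*n from y.isLt)]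
  exact Fin.ext rfl

lemma bp_L {n : ℕ} : blackPartner (n+1) (L n) = B n := by
  apply Fin.ext
  show (if (2*n+1) % 2 = 0 then 2*n+1+1 else 2*n+1-1) = 2*n
  rw [if_neg (by omega)]
  omega

lemma bp_B {n : ℕ} : blackPartner (n+1) (B n) = L n := by
  apply Fin.ext
  show (if (2*n) % 2 = 0 then 2*n+1 else 2*n-1) = 2*n+1
  rw [if_pos (by omega)]

lemma bp_emb {n : ℕ} (v : Fin (2*n)) : blackPartner (n+1) (emb v) = emb (blackPartner n v) :=
  Fin.ext rfl

section Splice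

variable {n : ℕ} {σ : Fin (2*(n+1)) → Fin (2*(n+1))}

lemma inj (hinv : ∀ v, σ (σ v) = v) {a b : Fin (2*(n+1))} (h : σ a = σ b) : a = b := by
  rw [← hinv a, h, hinv]

/-- The spliced involution on `Fin (2*n)`. -/
def spl (σ : Fin (2*(n+1)) → Fin (2*(n+1))) (v : Fin (2*n)) : Fin (2*n) :=
  if emb v = σ (L n) then toSm (σ (B n)) v
  else if emb v = σ (B n) then toSm (σ (L n)) v
  else toSm (σ (emb v)) v

lemma spl_branch1 {v : Fin (2*n)} (h1 : emb v = σ (L n)) :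
    spl σ v = toSm (σ (B n)) v := by
  simp only [spl]; rw [if_pos h1]

lemma spl_branch2 {v : Fin (2*n)} (h1 : emb v ≠ σ (L n)) (h2 : emb v = σ (B n)) :
    spl σ v = toSm (σ (L n)) v := by
  simp only [spl]; rw [if_neg h1, if_pos h2]

lemma spl_branch3 {v : Fin (2*n)} (h1 : emb v ≠ σ (L n)) (h2 : emb v ≠ σ (B n)) :
    spl σ v = toSm (σ (emb v)) v := by
  simp only [spl]; rw [if_neg h1, if_neg h2]

lemma lt_of_b1 (hinv : ∀ v, σ (σ v) = v) (hfpf : ∀ v, σ v ≠ v) {v : Fin (2*n)}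
    (h1 : emb v = σ (L n)) : (σ (B n)).val < 2*n := by
  have a1 : σ (B n) ≠ B n := hfpf _
  have a2 : σ (B n) ≠ L n := fun e => emb_ne_B v (by rw [h1, ← e, hinv])
  have a3 := (σ (B n)).isLt
  have b1 := fvne a1
  have b2 := fvne a2
  simp only [L_val, B_val] at b1 b2
  omega

lemma lt_of_b2 (hinv : ∀ v, σ (σ v) = v) (hfpf : ∀ v, σ v ≠ v) {v : Fin (2*n)}
    (h2 : emb v = σ (B n)) : (σ (L n)).val < 2*n := by
  have a1 : σ (L n) ≠ L n := hfpf _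
  have a2 : σ (L n) ≠ B n := fun e => emb_ne_L v (by rw [h2, ← e, hinv])
  have a3 := (σ (L n)).isLt
  have b1 := fvne a1
  have b2 := fvne a2
  simp only [L_val, B_val] at b1 b2
  omega

lemma lt_of_b3 (hinv : ∀ v, σ (σ v) = v) {v : Fin (2*n)}
    (h1 : emb v ≠ σ (L n)) (h2 : emb v ≠ σ (B n)) : (σ (emb v)).val < 2*n := by
  have a1 : σ (emb v) ≠ L n := fun e => h1 (by rw [← e, hinv])
  have a2 : σ (emb v) ≠ B n := fun e => h2 (by rw [← e, hinv])
  have a3 := (σ (emb v)).isLt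
  have b1 := fvne a1
  have b2 := fvne a2
  simp only [L_val, B_val] at b1 b2
  omega

lemma spl_invol (hinv : ∀ v, σ (σ v) = v) (hfpf : ∀ v, σ v ≠ v) :
    Function.Involutive (spl σ) := by
  intro v
  by_cases h1 : emb v = σ (L n)
  · have hm'lt := lt_of_b1 hinv hfpf h1
    rw [spl_branch1 h1]
    have ew : emb (toSm (σ (B n)) v) = σ (B n) := emb_toSm hm'lt
    have hne : emb (toSm (σ (B n)) v) ≠ σ (L n) := by
      rw [ew]; intro e
      exact absurd (inj hinv e) (fne (by simp only [B_val, L_val]; omega))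
    rw [spl_branch2 hne ew]
    apply Fin.ext
    rw [toSm_val (by rw [← h1]; exact v.isLt), ← h1, emb_val]
  · by_cases h2 : emb v = σ (B n)
    · have hmlt := lt_of_b2 hinv hfpf h2
      rw [spl_branch2 h1 h2]
      have ew : emb (toSm (σ (L n)) v) = σ (L n) := emb_toSm hmlt
      rw [spl_branch1 ew]
      apply Fin.ext
      rw [toSm_val (by rw [← h2]; exact v.isLt), ← h2, emb_val]
    · have hlt3 := lt_of_b3 hinv h1 h2
      rw [spl_branch3 h1 h2]
      have ew : emb (toSm (σ (emb v)) v) = σ (emb v) := emb_toSm hlt3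
      have c1 : emb (toSm (σ (emb v)) v) ≠ σ (L n) := by
        rw [ew]; intro e; exact emb_ne_L v (inj hinv e)
      have c2 : emb (toSm (σ (emb v)) v) ≠ σ (B n) := by
        rw [ew]; intro e; exact emb_ne_B v (inj hinv e)
      rw [spl_branch3 c1 c2, ew, hinv]
      exact Fin.ext (toSm_val v.isLt)

lemma spl_fpf (hinv : ∀ v, σ (σ v) = v) (hfpf : ∀ v, σ v ≠ v) (v : Fin (2*n)) :
    spl σ v ≠ v := by
  by_cases h1 : emb v = σ (L n)
  · rw [spl_branch1 h1]
    apply fne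
    rw [toSm_val (lt_of_b1 hinv hfpf h1)]
    have hne : σ (B n) ≠ σ (L n) :=
      fun e => absurd (inj hinv e) (fne (by simp only [B_val, L_val]; omega))
    have := fvne hne
    have := congrArg Fin.val h1
    simp only [emb_val] at this
    omega
  · by_cases h2 : emb v = σ (B n)
    · rw [spl_branch2 h1 h2]
      apply fne
      rw [toSm_val (lt_of_b2 hinv hfpf h2)]
      have hne : σ (L n) ≠ σ (B n) :=
        fun e => absurd (inj hinv e) (fne (by simp only [B_val, L_val]; omega))
      have := fvne hne
      have := congrArg Fin.val h2
      simp only [emb_val] at this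
      omega
    · rw [spl_branch3 h1 h2]
      apply fne
      rw [toSm_val (lt_of_b3 hinv h1 h2)]
      have := fvne (hfpf (emb v))
      simp only [emb_val] at this
      exact this

/-- Restriction of the colouring. -/
def downF {n k : ℕ} (f : Fin (2*(n+1)) → Fin k) (v : Fin (2*n)) : Fin k := f (emb v)

lemma down_black {k : ℕ} {f : Fin (2*(n+1)) → Fin k}
    (h3 : ∀ v, f (blackPartner (n+1) v) = f v) (v : Fin (2*n)) :
    downF f (blackPartner n v) = downF f v := by
  simp only [downF]
  rw [← bp_emb]
  exact h3 (emb v)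

lemma down_red {k : ℕ} {f : Fin (2*(n+1)) → Fin k}
    (hinv : ∀ v, σ (σ v) = v) (hfpf : ∀ v, σ v ≠ v)
    (h3 : ∀ v, f (blackPartner (n+1) v) = f v) (h4 : ∀ v, f (σ v) = f v) (v : Fin (2*n)) :
    downF f (spl σ v) = downF f v := by
  have hBL : f (B n) = f (L n) := by rw [← bp_L (n := n)]; exact h3 (L n)
  simp only [downF]
  by_cases h1 : emb v = σ (L n)
  · rw [spl_branch1 h1, emb_toSm (lt_of_b1 hinv hfpf h1), h4, hBL, h1, h4]
  · by_cases h2 : emb v = σ (B n)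
    · rw [spl_branch2 h1 h2, emb_toSm (lt_of_b2 hinv hfpf h2), h4, ← hBL, h2, h4]
    · rw [spl_branch3 h1 h2, emb_toSm (lt_of_b3 hinv h1 h2), h4]

end Splice

section Up

variable {n k : ℕ} {σ' : Fin (2*n) → Fin (2*n)}

lemma inj' (hinv' : ∀ v, σ' (σ' v) = v) {a b : Fin (2*n)} (h : σ' a = σ' b) : a = b := by
  rw [← hinv' a, h, hinv']

/-- Extension of an involution in the black-parallel case. -/
def up1 (σ' : Fin (2*n) → Fin (2*n)) (v : Fin (2*(n+1))) : Fin (2*(n+1)) :=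
  if h : v.val < 2*n then emb (σ' ⟨v.val, h⟩) else if v.val = 2*n then L n else B n

lemma up1_L : up1 σ' (L n) = B n := by
  simp only [up1]
  rw [dif_neg (by simp), if_neg (by simp)]

lemma up1_B : up1 σ' (B n) = L n := by
  simp only [up1]
  rw [dif_neg (by simp), if_pos (by simp)]

lemma up1_emb (x : Fin (2*n)) : up1 σ' (emb x) = emb (σ' x) := by
  simp only [up1]
  rw [dif_pos (show (emb x).val < 2*n from x.isLt)]
  rfl

lemma up1_invol (hinv' : ∀ v, σ' (σ' v) = v) : ∀ v, up1 σ' (up1 σ' v) = v := by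
  intro v
  rcases cases3 v with rfl | rfl | ⟨x, rfl⟩
  · rw [up1_L, up1_B]
  · rw [up1_B, up1_L]
  · rw [up1_emb, up1_emb, hinv']

lemma up1_fpf (hfpf' : ∀ v, σ' v ≠ v) : ∀ v, up1 σ' v ≠ v := by
  intro v
  rcases cases3 v with rfl | rfl | ⟨x, rfl⟩
  · rw [up1_L]; exact fne (by simp)
  · rw [up1_B]; exact fne (by simp)
  · rw [up1_emb]
    exact fun e => hfpf' x (emb_inj e)

/-- Extension of an involution in the splice case. -/
def up2 (σ' : Fin (2*n) → Fin (2*n)) (m₀ : Fin (2*n)) (v : Fin (2*(n+1))) : Fin (2*(n+1)) :=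
  if v = L n then emb m₀
  else if v = emb m₀ then L n
  else if v = B n then emb (σ' m₀)
  else if v = emb (σ' m₀) then B n
  else if h : v.val < 2*n then emb (σ' ⟨v.val, h⟩) else v

variable {m₀ : Fin (2*n)}

lemma up2_L : up2 σ' m₀ (L n) = emb m₀ := by
  simp only [up2]; rw [if_pos trivial]

lemma up2_a : up2 σ' m₀ (emb m₀) = L n := by
  simp only [up2]; rw [if_neg (emb_ne_L m₀), if_pos trivial]

lemma up2_B : up2 σ' m₀ (B n) = emb (σ' m₀) := by
  simp only [up2]
  rw [if_neg (fne (by simp)), if_neg (Ne.symm (emb_ne_B m₀)), if_pos trivial]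

lemma up2_b (hfpf' : ∀ v, σ' v ≠ v) : up2 σ' m₀ (emb (σ' m₀)) = B n := by
  simp only [up2]
  rw [if_neg (emb_ne_L _), if_neg (fun e => hfpf' m₀ (emb_inj e)),
    if_neg (emb_ne_B _), if_pos trivial]

lemma up2_emb (x : Fin (2*n)) (hx1 : x ≠ m₀) (hx2 : x ≠ σ' m₀) :
    up2 σ' m₀ (emb x) = emb (σ' x) := by
  simp only [up2]
  rw [if_neg (emb_ne_L _), if_neg (fun e => hx1 (emb_inj e)), if_neg (emb_ne_B _),
    if_neg (fun e => hx2 (emb_inj e)), dif_pos (show (emb x).val < 2*n from x.isLt)]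
  rfl

lemma up2_invol (hinv' : ∀ v, σ' (σ' v) = v) (hfpf' : ∀ v, σ' v ≠ v) :
    ∀ v, up2 σ' m₀ (up2 σ' m₀ v) = v := by
  intro v
  rcases cases3 v with rfl | rfl | ⟨x, rfl⟩
  · rw [up2_L, up2_a]
  · rw [up2_B, up2_b hfpf']
  · by_cases hx1 : x = m₀
    · subst hx1; rw [up2_a, up2_L]
    · by_cases hx2 : x = σ' m₀
      · subst hx2; rw [up2_b hfpf', up2_B]
      · rw [up2_emb x hx1 hx2]
        have c1 : σ' x ≠ m₀ := fun e => hx2 (by rw [← e, hinv'])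
        have c2 : σ' x ≠ σ' m₀ := fun e => hx1 (inj' hinv' e)
        rw [up2_emb (σ' x) c1 c2, hinv']

lemma up2_fpf (hfpf' : ∀ v, σ' v ≠ v) : ∀ v, up2 σ' m₀ v ≠ v := by
  intro v
  rcases cases3 v with rfl | rfl | ⟨x, rfl⟩
  · rw [up2_L]; exact emb_ne_L m₀
  · rw [up2_B]; exact emb_ne_B _
  · by_cases hx1 : x = m₀
    · subst hx1; rw [up2_a]; exact (emb_ne_L _).symm
    · by_cases hx2 : x = σ' m₀
      · subst hx2; rw [up2_b hfpf']; exact (emb_ne_B _).symm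
      · rw [up2_emb x hx1 hx2]
        exact fun e => hfpf' x (emb_inj e)

/-- Extension of a colouring. -/
def upF (f' : Fin (2*n) → Fin k) (c : Fin k) (v : Fin (2*(n+1))) : Fin k :=
  if h : v.val < 2*n then f' ⟨v.val, h⟩ else c

variable {f' : Fin (2*n) → Fin k} {c : Fin k}

lemma upF_L : upF f' c (L n) = c := by
  simp only [upF]; rw [dif_neg (by simp)]

lemma upF_B : upF f' c (B n) = c := by
  simp only [upF]; rw [dif_neg (by simp)]

lemma upF_emb (y : Fin (2*n)) : upF f' c (emb y) = f' y := by
  simp only [upF]; rw [dif_pos (show (emb y).val < 2*n from y.isLt)]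
  rfl

lemma upF_black (h3' : ∀ v, f' (blackPartner n v) = f' v) :
    ∀ v, upF f' c (blackPartner (n+1) v) = upF f' c v := by
  intro v
  rcases cases3 v with rfl | rfl | ⟨x, rfl⟩
  · rw [bp_L, upF_B, upF_L]
  · rw [bp_B, upF_L, upF_B]
  · rw [bp_emb, upF_emb, upF_emb]
    exact h3' x

lemma upF_red1 (h4' : ∀ v, f' (σ' v) = f' v) :
    ∀ v, upF f' c (up1 σ' v) = upF f' c v := by
  intro v
  rcases cases3 v with rfl | rfl | ⟨x, rfl⟩
  · rw [up1_L, upF_B, upF_L]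
  · rw [up1_B, upF_L, upF_B]
  · rw [up1_emb, upF_emb, upF_emb]
    exact h4' x

lemma upF_red2 (hfpf' : ∀ v, σ' v ≠ v) (h4' : ∀ v, f' (σ' v) = f' v) :
    ∀ v, upF f' (f' m₀) (up2 σ' m₀ v) = upF f' (f' m₀) v := by
  intro v
  rcases cases3 v with rfl | rfl | ⟨x, rfl⟩
  · rw [up2_L, upF_emb, upF_L]
  · rw [up2_B, upF_emb, upF_B]
    exact h4' m₀
  · by_cases hx1 : x = m₀
    · subst hx1; rw [up2_a, upF_L, upF_emb]
    · by_cases hx2 : x = σ' m₀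
      · subst hx2; rw [up2_b hfpf', upF_B, upF_emb]
        exact (h4' m₀).symm
      · rw [up2_emb x hx1 hx2, upF_emb, upF_emb]
        exact h4' x

end Up

section Main

variable {n k : ℕ}

lemma valid_ext {m k : ℕ} {p q : Valid m k}
    (h1 : ∀ v, p.1.1 v = q.1.1 v) (h2 : ∀ v, p.1.2 v = q.1.2 v) : p = q :=
  Subtype.ext (Prod.ext (Equiv.ext h1) (funext h2))

/-- Forward direction of the splice bijection. -/
def fwd (p : Valid (n+1) k) : (Fin k ⊕ Fin (2*n)) × Valid n k :=
  (if hc : p.1.1 (L n) = B n then Sum.inl (p.1.2 (L n))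
   else Sum.inr ⟨(p.1.1 (L n)).val, by
      have a1 := fvne (p.2.2.1 (L n))
      have a2 := fvne hc
      have a3 := (p.1.1 (L n)).isLt
      simp only [L_val, B_val] at a1 a2
      omega⟩,
   ⟨(Function.Involutive.toPerm (spl ⇑p.1.1) (spl_invol p.2.1 p.2.2.1), downF p.1.2),
    spl_invol p.2.1 p.2.2.1,
    spl_fpf p.2.1 p.2.2.1,
    down_black p.2.2.2.1,
    down_red p.2.1 p.2.2.1 p.2.2.2.1 p.2.2.2.2⟩)

/-- Backward direction of the splice bijection. -/
def bwd (s : Fin k ⊕ Fin (2*n)) (r : Valid n k) : Valid (n+1) k :=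
  match s with
  | Sum.inl c =>
    ⟨(Function.Involutive.toPerm (up1 ⇑r.1.1) (up1_invol r.2.1), upF r.1.2 c),
     up1_invol r.2.1,
     up1_fpf r.2.2.1,
     upF_black r.2.2.2.1,
     upF_red1 r.2.2.2.2⟩
  | Sum.inr m₀ =>
    ⟨(Function.Involutive.toPerm (up2 ⇑r.1.1 m₀) (up2_invol r.2.1 r.2.2.1),
        upF r.1.2 (r.1.2 m₀)),
     up2_invol r.2.1 r.2.2.1,
     up2_fpf r.2.2.1,
     upF_black r.2.2.2.1,
     upF_red2 r.2.2.1 r.2.2.2.2⟩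

lemma bwd_fwd (p : Valid (n+1) k) : bwd (fwd p).1 (fwd p).2 = p := by
  obtain ⟨⟨σ, f⟩, h1, h2, h3, h4⟩ := p
  replace h1 : ∀ v, σ (σ v) = v := h1
  replace h2 : ∀ v, σ v ≠ v := h2
  replace h3 : ∀ v, f (blackPartner (n+1) v) = f v := h3
  replace h4 : ∀ v, f (σ v) = f v := h4
  have hBL : f (B n) = f (L n) := by rw [← bp_L (n := n)]; exact h3 (L n)
  by_cases hc : σ (L n) = B n
  · have hB : σ (B n) = L n := by rw [← hc, h1]
    have hfwd1 : (fwd (⟨(σ, f), h1, h2, h3, h4⟩ : Valid (n+1) k)).1 = Sum.inl (f (L n)) := by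
      simp only [fwd]; rw [dif_pos hc]
    rw [hfwd1]
    apply valid_ext
    · intro v
      show up1 (spl ⇑σ) v = σ v
      rcases cases3 v with rfl | rfl | ⟨x, rfl⟩
      · rw [up1_L, hc]
      · rw [up1_B, hB]
      · have c1 : emb x ≠ ⇑σ (L n) := by rw [hc]; exact emb_ne_B x
        have c2 : emb x ≠ ⇑σ (B n) := by rw [hB]; exact emb_ne_L x
        rw [up1_emb, spl_branch3 c1 c2, emb_toSm (lt_of_b3 h1 c1 c2)]
    · intro v
      show upF (downF f) (f (L n)) v = f v
      rcases cases3 v with rfl | rfl | ⟨x, rfl⟩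
      · rw [upF_L]
      · rw [upF_B, hBL]
      · rw [upF_emb]; rfl
  · have hfwd1 : (fwd (⟨(σ, f), h1, h2, h3, h4⟩ : Valid (n+1) k)).1
        = Sum.inr ⟨(σ (L n)).val, by
            have a1 := fvne (h2 (L n))
            have a2 := fvne hc
            have a3 := (σ (L n)).isLt
            simp only [L_val, B_val] at a1 a2
            omega⟩ := by
      simp only [fwd]; rw [dif_neg hc]
    rw [hfwd1]
    set m₀ : Fin (2*n) := ⟨(σ (L n)).val, by
            have a1 := fvne (h2 (L n))
            have a2 := fvne hc
            have a3 := (σ (L n)).isLt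
            simp only [L_val, B_val] at a1 a2
            omega⟩ with hm₀
    have ha : emb m₀ = σ (L n) := Fin.ext rfl
    have hm'lt : (σ (B n)).val < 2*n := lt_of_b1 h1 h2 ha
    have hb : emb (spl ⇑σ m₀) = σ (B n) := by
      rw [spl_branch1 ha, emb_toSm hm'lt]
    apply valid_ext
    · intro v
      show up2 (spl ⇑σ) m₀ v = σ v
      rcases cases3 v with rfl | rfl | ⟨x, rfl⟩
      · rw [up2_L, ha]
      · rw [up2_B, hb]
      · by_cases hx1 : x = m₀
        · subst hx1; rw [up2_a, ha, h1]
        · by_cases hx2 : x = spl ⇑σ m₀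
          · subst hx2
            rw [up2_b (spl_fpf h1 h2), hb, h1]
          · have c1 : emb x ≠ σ (L n) := fun e => hx1 (emb_inj (e.trans ha.symm))
            have c2 : emb x ≠ σ (B n) := fun e => hx2 (emb_inj (e.trans hb.symm))
            rw [up2_emb x hx1 hx2, spl_branch3 c1 c2, emb_toSm (lt_of_b3 h1 c1 c2)]
    · intro v
      have hcv : downF f m₀ = f (L n) := by
        simp only [downF]; rw [ha, h4]
      show upF (downF f) (downF f m₀) v = f v
      rcases cases3 v with rfl | rfl | ⟨x, rfl⟩
      · rw [upF_L, hcv]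
      · rw [upF_B, hcv, hBL]
      · rw [upF_emb]; rfl

lemma fwd_bwd (s : Fin k ⊕ Fin (2*n)) (r : Valid n k) : fwd (bwd s r) = (s, r) := by
  obtain ⟨⟨σ', f'⟩, h1, h2, h3, h4⟩ := r
  replace h1 : ∀ v, σ' (σ' v) = v := h1
  replace h2 : ∀ v, σ' v ≠ v := h2
  replace h3 : ∀ v, f' (blackPartner n v) = f' v := h3
  replace h4 : ∀ v, f' (σ' v) = f' v := h4
  cases s with
  | inl c =>
    have hc : up1 ⇑σ' (L n) = B n := up1_L
    refine Prod.ext ?_ ?_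
    · show (fwd (bwd (Sum.inl c) _)).1 = Sum.inl c
      simp only [fwd, bwd, Function.Involutive.coe_toPerm]
      erw [dif_pos hc]
      show Sum.inl (upF f' c (L n)) = Sum.inl c
      rw [upF_L]
    · apply valid_ext
      · intro v
        show spl (up1 ⇑σ') v = σ' v
        have c1 : emb v ≠ up1 ⇑σ' (L n) := by rw [up1_L]; exact emb_ne_B v
        have c2 : emb v ≠ up1 ⇑σ' (B n) := by rw [up1_B]; exact emb_ne_L v
        rw [spl_branch3 c1 c2, up1_emb, toSm_emb]
      · intro v
        show downF (upF f' c) v = f' v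
        simp only [downF]
        rw [upF_emb]
  | inr m₀ =>
    have hXL : up2 ⇑σ' m₀ (L n) = emb m₀ := up2_L
    have hXB : up2 ⇑σ' m₀ (B n) = emb (σ' m₀) := up2_B
    have hc : ¬(up2 ⇑σ' m₀ (L n) = B n) := by rw [hXL]; exact emb_ne_B m₀
    refine Prod.ext ?_ ?_
    · show (fwd (bwd (Sum.inr m₀) _)).1 = Sum.inr m₀
      simp only [fwd, bwd, Function.Involutive.coe_toPerm]
      erw [dif_neg hc]
      congr 1
      apply Fin.ext
      show (up2 ⇑σ' m₀ (L n)).val = m₀.val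
      rw [hXL]
      rfl
    · apply valid_ext
      · intro v
        show spl (up2 ⇑σ' m₀) v = σ' v
        by_cases hx1 : v = m₀
        · subst hx1
          rw [spl_branch1 hXL.symm, hXB, toSm_emb]
        · by_cases hx2 : v = σ' m₀
          · subst hx2
            have c1 : emb (σ' m₀) ≠ up2 ⇑σ' m₀ (L n) := by
              rw [hXL]; exact fun e => h2 m₀ (emb_inj e)
            rw [spl_branch2 c1 hXB.symm, hXL, toSm_emb, h1 m₀]
          · have c1 : emb v ≠ up2 ⇑σ' m₀ (L n) := by
              rw [hXL]; exact fun e => hx1 (emb_inj e)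
            have c2 : emb v ≠ up2 ⇑σ' m₀ (B n) := by
              rw [hXB]; exact fun e => hx2 (emb_inj e)
            rw [spl_branch3 c1 c2, up2_emb v hx1 hx2, toSm_emb]
      · intro v
        show downF (upF f' (f' m₀)) v = f' v
        simp only [downF]
        rw [upF_emb]

/-- The splice bijection. -/
def spliceEquiv (n k : ℕ) : Valid (n+1) k ≃ (Fin k ⊕ Fin (2*n)) × Valid n k where
  toFun := fwd
  invFun q := bwd q.1 q.2
  left_inv := bwd_fwd
  right_inv q := by rw [fwd_bwd q.1 q.2]

lemma gFun_succ (k n : ℕ) : gFun k (n+1) = (k + 2*n) * gFun k n := by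
  rw [gFun_eq, gFun_eq, Nat.card_congr (spliceEquiv n k), Nat.card_prod, Nat.card_sum]
  simp [Nat.card_eq_fintype_card]

end Main
end Stmt15

theorem stmt15 (k n : ℕ) :
    gFun k 0 = 1 ∧
    (0 < n → gFun k n = (k + 2 * (n - 1)) * gFun k (n - 1)) ∧
    gFun k n = ∏ j ∈ range n, (k + 2 * j) := by
  refine ⟨Stmt15.gFun_zero k, ?_, ?_⟩
  · intro hn
    obtain ⟨m, rfl⟩ : ∃ m, n = m + 1 := ⟨n - 1, by omega⟩
    simpa using Stmt15.gFun_succ k m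
  · induction n with
    | zero => simpa using Stmt15.gFun_zero k
    | succ m ih =>
      rw [Stmt15.gFun_succ k m, ih, Finset.prod_range_succ, mul_comm]
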